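/- For all n ≥ 0, b_n = Σ_{i ≥ 1} ⌊(i-1)/2⌋·|B(n-i)|, where the sum is over all integers i with 1 ≤ i ≤ n. -/
import Mathlib


/-- `pre2 s` is the multiset of all pairwise products of two distinct entries
(by position) of the multiset `s`, i.e. the summands of `e₂` evaluated at `s`. -/
def pre2 (s : Multiset ℕ) : Multiset ℕ := (Multiset.powersetCard 2 s).map Multiset.prod

open Classical in
/-- The finset of binary partitions of `n`: partitions all of whose parts are powers of 2. -/
noncomputable def binaryPartitions (n : ℕ) : Finset (Nat.Partition n) :=
  Finset.univ.filter fun l => ∀ p ∈ l.parts, ∃ i : ℕ, p = 2 ^ i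

/-- `b n = m₂(ImB₂(n))`: the total number of parts equal to 2 in the image of `pre2`
on binary partitions of `n` with at least two parts; by injectivity this equals
`∑_{λ ∈ B(n)} m₁(λ)·m₂(λ)`. -/
noncomputable def b (n : ℕ) : ℕ :=
  ∑ l ∈ binaryPartitions n, (l.parts.count 1) * (l.parts.count 2)

lemma mem_binaryPartitions {n : ℕ} {l : Nat.Partition n} :
    l ∈ binaryPartitions n ↔ ∀ p ∈ l.parts, ∃ i : ℕ, p = 2 ^ i := by
  classical
  simp [binaryPartitions]

lemma msum_le {s t : Multiset ℕ} (h : s ≤ t) : s.sum ≤ t.sum := by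
  obtain ⟨u, rfl⟩ := Multiset.le_iff_exists_add.mp h
  simp

lemma repl_le_of_counts {x y : ℕ} (s : Multiset ℕ) (h1 : x ≤ s.count 1) (h2 : y ≤ s.count 2) :
    Multiset.replicate x 1 + Multiset.replicate y 2 ≤ s := by
  rw [Multiset.le_iff_count]
  intro a
  rw [Multiset.count_add, Multiset.count_replicate, Multiset.count_replicate]
  by_cases ha1 : a = 1
  · subst ha1; simpa using h1
  · by_cases ha2 : a = 2
    · subst ha2; simpa using h2
    · simp [Ne.symm ha1, Ne.symm ha2]

lemma counts_bound {n : ℕ} (l : Nat.Partition n) :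
    l.parts.count 1 + 2 * l.parts.count 2 ≤ n := by
  have h := msum_le (repl_le_of_counts l.parts le_rfl le_rfl)
  simp [Multiset.sum_replicate, l.parts_sum, smul_eq_mul] at h
  omega

lemma card_filter_xy (n x y : ℕ) (h : x + 2 * y ≤ n) :
    ((binaryPartitions n).filter
        (fun l => x ≤ l.parts.count 1 ∧ y ≤ l.parts.count 2)).card
      = (binaryPartitions (n - (x + 2 * y))).card := by
  classical
  set r : Multiset ℕ := Multiset.replicate x 1 + Multiset.replicate y 2 with hr
  have hrsum : r.sum = x + 2 * y := by
    simp [hr, Multiset.sum_replicate, smul_eq_mul]; ring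
  have key : ∀ l : Nat.Partition n, x ≤ l.parts.count 1 → y ≤ l.parts.count 2 →
      r ≤ l.parts := fun l h1 h2 => repl_le_of_counts l.parts h1 h2
  refine Finset.card_bij'
    (i := fun l hl => ⟨l.parts - r, ?_, ?_⟩)
    (j := fun m hm => ⟨r + m.parts, ?_, ?_⟩) ?_ ?_ ?_ ?_
  · intro i hi
    exact l.parts_pos (Multiset.mem_of_le (Multiset.sub_le_self _ _) hi)
  · rw [Finset.mem_filter] at hl
    have hle := key l hl.2.1 hl.2.2
    have := tsub_add_cancel_of_le hle
    have hs : (l.parts - r).sum + r.sum = n := by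
      rw [← Multiset.sum_add, this, l.parts_sum]
    omega
  · intro i hi
    rcases Multiset.mem_add.mp hi with h' | h'
    · simp [hr, Multiset.mem_replicate] at h'
      omega
    · exact m.parts_pos h'
  · rw [Multiset.sum_add, hrsum, m.parts_sum]
    omega
  · intro l hl
    rw [Finset.mem_filter] at hl
    rw [mem_binaryPartitions]
    intro p hp
    exact (mem_binaryPartitions.mp hl.1) p
      (Multiset.mem_of_le (Multiset.sub_le_self _ _) hp)
  · intro m hm
    rw [Finset.mem_filter]
    constructor
    · rw [mem_binaryPartitions]
      intro p hp
      rcases Multiset.mem_add.mp hp with h' | h'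
      · simp [hr, Multiset.mem_replicate] at h'
        rcases h' with ⟨-, rfl⟩ | ⟨-, rfl⟩
        · exact ⟨0, rfl⟩
        · exact ⟨1, rfl⟩
      · exact (mem_binaryPartitions.mp hm) p h'
    · constructor
      · simp [Multiset.count_add, hr, Multiset.count_replicate]
      · simp [Multiset.count_add, hr, Multiset.count_replicate]
  · intro l hl
    rw [Finset.mem_filter] at hl
    have hle := key l hl.2.1 hl.2.2
    apply Nat.Partition.ext
    simp only
    rw [add_comm, tsub_add_cancel_of_le hle]
  · intro m hm
    apply Nat.Partition.ext
    simp only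
    rw [add_tsub_cancel_left]

lemma card_filter_xy_zero (n x y : ℕ) (h : ¬ (x + 2 * y ≤ n)) :
    ((binaryPartitions n).filter
        (fun l => x ≤ l.parts.count 1 ∧ y ≤ l.parts.count 2)).card = 0 := by
  rw [Finset.card_eq_zero, Finset.filter_eq_empty_iff]
  intro l _
  rintro ⟨h1, h2⟩
  have := counts_bound l
  omega

lemma fiber_card (n i : ℕ) (hi1 : 1 ≤ i) (hin : i ≤ n) :
    (((Finset.Icc 1 n) ×ˢ (Finset.Icc 1 n)).filter
        (fun p => p.1 + 2 * p.2 = i)).card = (i - 1) / 2 := by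
  rw [show (i - 1) / 2 = (Finset.Icc 1 ((i - 1) / 2)).card by simp]
  apply Finset.card_bij' (fun p _ => p.2) (fun y _ => (i - 2 * y, y))
  · intro p hp
    simp only [Finset.mem_filter, Finset.mem_product, Finset.mem_Icc] at hp
    rw [Finset.mem_Icc]
    refine ⟨hp.1.2.1, ?_⟩
    rw [Nat.le_div_iff_mul_le (by norm_num)]
    omega
  · intro y hy
    rw [Finset.mem_Icc] at hy
    have h2 := (Nat.le_div_iff_mul_le (by norm_num : 0 < 2)).mp hy.2
    simp only [Finset.mem_filter, Finset.mem_product, Finset.mem_Icc]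
    omega
  · intro p hp
    simp only [Finset.mem_filter, Finset.mem_product, Finset.mem_Icc] at hp
    have h1 : i - 2 * p.2 = p.1 := by omega
    rw [h1]
  · intro y hy
    rfl

theorem stmt_7 (n : ℕ) :
    b n = ∑ i ∈ Finset.Icc 1 n, ((i - 1) / 2) * (binaryPartitions (n - i)).card := by
  classical
  set S := (Finset.Icc 1 n) ×ˢ (Finset.Icc 1 n) with hS
  have step1 : b n = ∑ p ∈ S, ((binaryPartitions n).filter
      (fun l => p.1 ≤ l.parts.count 1 ∧ p.2 ≤ l.parts.count 2)).card := by
    rw [b]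
    have h1 : ∀ l ∈ binaryPartitions n,
        l.parts.count 1 * l.parts.count 2
          = ∑ p ∈ S, if p.1 ≤ l.parts.count 1 ∧ p.2 ≤ l.parts.count 2 then 1 else 0 := by
      intro l _
      have hb := counts_bound l
      rw [Finset.sum_boole, Nat.cast_id]
      have hfe : S.filter (fun p => p.1 ≤ l.parts.count 1 ∧ p.2 ≤ l.parts.count 2)
          = (Finset.Icc 1 (l.parts.count 1)) ×ˢ (Finset.Icc 1 (l.parts.count 2)) := by
        ext ⟨u, v⟩
        simp only [hS, Finset.mem_filter, Finset.mem_product, Finset.mem_Icc]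
        omega
      rw [hfe]
      simp
    rw [Finset.sum_congr rfl h1, Finset.sum_comm]
    exact Finset.sum_congr rfl fun p _ => by rw [Finset.sum_boole, Nat.cast_id]
  have step2 : b n = ∑ p ∈ S,
      (fun i => if i ≤ n then (binaryPartitions (n - i)).card else 0) (p.1 + 2 * p.2) := by
    rw [step1]
    refine Finset.sum_congr rfl fun p _ => ?_
    by_cases h : p.1 + 2 * p.2 ≤ n
    · rw [card_filter_xy n p.1 p.2 h]
      simp [h]
    · rw [card_filter_xy_zero n p.1 p.2 h]
      simp [h]
  rw [step2]
  have hmaps : ∀ p ∈ S, p.1 + 2 * p.2 ∈ Finset.Icc 1 (3 * n) := by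
    intro p hp
    obtain ⟨h1, h2⟩ := Finset.mem_product.mp hp
    rw [Finset.mem_Icc] at h1 h2
    rw [Finset.mem_Icc]
    omega
  rw [← Finset.sum_fiberwise_of_maps_to hmaps
      (fun p => (fun i => if i ≤ n then (binaryPartitions (n - i)).card else 0) (p.1 + 2 * p.2))]
  have hinner : ∀ i, (∑ p ∈ S.filter (fun p => p.1 + 2 * p.2 = i),
        (fun j => if j ≤ n then (binaryPartitions (n - j)).card else 0) (p.1 + 2 * p.2))
      = (S.filter (fun p => p.1 + 2 * p.2 = i)).card *
          (if i ≤ n then (binaryPartitions (n - i)).card else 0) := by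
    intro i
    have h1 : (∑ p ∈ S.filter (fun p => p.1 + 2 * p.2 = i),
          (fun j => if j ≤ n then (binaryPartitions (n - j)).card else 0) (p.1 + 2 * p.2))
        = ∑ _p ∈ S.filter (fun p => p.1 + 2 * p.2 = i),
            (if i ≤ n then (binaryPartitions (n - i)).card else 0) :=
      Finset.sum_congr rfl (fun p hp => by rw [(Finset.mem_filter.mp hp).2])
    rw [h1, Finset.sum_const, smul_eq_mul]
  rw [Finset.sum_congr rfl fun i _ => hinner i]
  rw [← Finset.sum_subset (Finset.Icc_subset_Icc_right (by omega) :
      Finset.Icc 1 n ⊆ Finset.Icc 1 (3 * n))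
      (fun i hi hni => by
        rw [Finset.mem_Icc] at hi
        rw [Finset.mem_Icc] at hni
        have : ¬ i ≤ n := by omega
        rw [if_neg this, mul_zero])]
  refine Finset.sum_congr rfl fun i hi => ?_
  rw [Finset.mem_Icc] at hi
  rw [if_pos hi.2, fiber_card n i hi.1 hi.2]
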